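/- Let G be a finite connected block graph with at least two blocks. Then γt(G) = 2γ(G) if and only if the following three conditions hold: (1) G has a unique minimum dominating set D, (2) D = D1 ∪ D2, and (3) D is a packing in G; where D1 is the set of cut-vertices that are the unique cut-vertex of some block of G, and D2 is the set of cut-vertices having at least two neighbors which are not cut-vertices and which belong to different blocks of G. -/

import Mathlib

open SimpleGraph

namespace TotalDom

variable {V : Type*}

/-- The closed neighborhood `N[v]` of a vertex. -/
def cnbr (G : SimpleGraph V) (v : V) : Set V := insert v (G.neighborSet v)

/-- `S` is a dominating set: every vertex outside `S` has a neighbor in `S`. -/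
def IsDomSet (G : SimpleGraph V) (S : Set V) : Prop := ∀ v ∉ S, ∃ u ∈ S, G.Adj u v

/-- `S` is a total dominating set: every vertex has a neighbor in `S`. -/
def IsTotalDomSet (G : SimpleGraph V) (S : Set V) : Prop := ∀ v : V, ∃ u ∈ S, G.Adj u v

/-- The domination number `γ(G)`. -/
noncomputable def domNum (G : SimpleGraph V) : ℕ :=
  sInf {n | ∃ S : Set V, IsDomSet G S ∧ S.ncard = n}

/-- The total domination number `γₜ(G)`. -/
noncomputable def totalDomNum (G : SimpleGraph V) : ℕ :=
  sInf {n | ∃ S : Set V, IsTotalDomSet G S ∧ S.ncard = n}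

/-- A minimum dominating set (γ-set). -/
def IsMinDomSet (G : SimpleGraph V) (S : Set V) : Prop := IsDomSet G S ∧ S.ncard = domNum G

/-- `S` is a packing: closed neighborhoods of distinct members are disjoint. -/
def IsPacking (G : SimpleGraph V) (S : Set V) : Prop :=
  S.Pairwise fun u v => Disjoint (cnbr G u) (cnbr G v)

/-- `M(v)`: neighbors of `v` having a neighbor outside `N[v]`. -/
def Mset (G : SimpleGraph V) (v : V) : Set V :=
  {u | G.Adj v u ∧ ∃ w, G.Adj u w ∧ w ∉ cnbr G v}

/-- `D(v)`: neighbors `u` of `v` that are not true twins of `v` with `N[u] ⊆ N[v]`. -/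
def Dset (G : SimpleGraph V) (v : V) : Set V :=
  {u | G.Adj v u ∧ cnbr G u ≠ cnbr G v ∧ cnbr G u ⊆ cnbr G v}

/-- `T(v)`: `v` together with its true twins. -/
def Tset (G : SimpleGraph V) (v : V) : Set V := {u | cnbr G u = cnbr G v}

/-- A non-isolated vertex `v` is special if no `u ∈ M(v)` satisfies `D(v) ⊆ N(u)`. -/
def Special (G : SimpleGraph V) (v : V) : Prop :=
  (G.neighborSet v).Nonempty ∧ ¬ ∃ u ∈ Mset G v, Dset G v ⊆ G.neighborSet u

/-- An `S(G)`-set: a set of special vertices containing exactly one vertex from each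
true-twin equivalence class of special vertices. -/
def IsSGSet (G : SimpleGraph V) (S : Set V) : Prop :=
  (∀ u ∈ S, Special G u) ∧ ∀ v, Special G v → ∃! u, u ∈ S ∧ u ∈ Tset G v

/-- `G` has no isolated vertices. -/
def NoIsolated (G : SimpleGraph V) : Prop := ∀ v : V, ∃ u, G.Adj v u

/-- `G` contains no induced copy of `H`. -/
def Free {α : Type*} (H : SimpleGraph α) (G : SimpleGraph V) : Prop := IsEmpty (H ↪g G)

/-- `H₁`: a 6-cycle plus one chord between vertices at distance two along the cycle. -/
def H1 : SimpleGraph (Fin 6) := cycleGraph 6 ⊔ fromEdgeSet {s(0, 2)}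

/-- `H₂`: a 6-cycle `x₁x₂x₃x₄x₅x₆` plus the chords `x₂x₆` and `x₃x₅`. -/
def H2 : SimpleGraph (Fin 6) := cycleGraph 6 ⊔ fromEdgeSet {s(1, 5), s(2, 4)}

/-- A leaf: a vertex of degree one. -/
def IsLeaf (G : SimpleGraph V) (v : V) : Prop := ∃! u, G.Adj v u

/-- A support vertex: a vertex adjacent to a leaf. -/
def IsSupport (G : SimpleGraph V) (v : V) : Prop := ∃ u, G.Adj v u ∧ IsLeaf G u

/-- `sup(G)`: the set of support vertices. -/
def supSet (G : SimpleGraph V) : Set V := {v | IsSupport G v}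

/-- `v` is a cut-vertex: deleting `v` disconnects `G`. -/
def IsCutVertex (G : SimpleGraph V) (v : V) : Prop :=
  ¬ (G.induce ({v}ᶜ : Set V)).Preconnected

/-- The subgraph of `G` induced on `B` has no cut-vertex of its own. -/
def NoCutVertexWithin (G : SimpleGraph V) (B : Set V) : Prop :=
  ∀ v ∈ B, (B \ {v}).Nonempty → (G.induce (B \ {v})).Connected

/-- `B` is a block of `G`: a maximal vertex set inducing a connected subgraph without a
cut-vertex (a maximal 2-connected subgraph or a `K₂`). -/
def IsBlock (G : SimpleGraph V) (B : Set V) : Prop :=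
  (B.Nonempty ∧ (G.induce B).Connected ∧ NoCutVertexWithin G B) ∧
    ∀ B' : Set V, B'.Nonempty → (G.induce B').Connected → NoCutVertexWithin G B' →
      B ⊆ B' → B = B'

/-- `G` is a block graph: every block of `G` is complete. -/
def IsBlockGraph (G : SimpleGraph V) : Prop :=
  ∀ B : Set V, IsBlock G B → ∀ u ∈ B, ∀ v ∈ B, u ≠ v → G.Adj u v

/-- `D₁`: the cut-vertices that constitute the unique cut-vertex in some block of `G`. -/
def D1set (G : SimpleGraph V) : Set V :=
  {v | IsCutVertex G v ∧ ∃ B : Set V, IsBlock G B ∧ v ∈ B ∧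
    ∀ u ∈ B, IsCutVertex G u → u = v}

/-- `D₂`: the cut-vertices having at least two neighbors which are not cut-vertices and
belong to different blocks of `G`. -/
def D2set (G : SimpleGraph V) : Set V :=
  {v | IsCutVertex G v ∧ ∃ x y : V, x ≠ y ∧ G.Adj v x ∧ G.Adj v y ∧
    ¬ IsCutVertex G x ∧ ¬ IsCutVertex G y ∧
    ∃ Bx By : Set V, IsBlock G Bx ∧ IsBlock G By ∧ x ∈ Bx ∧ y ∈ By ∧ Bx ≠ By}

section Lemmas
variable {G : SimpleGraph V}

lemma mem_cnbr {v u : V} : u ∈ cnbr G v ↔ u = v ∨ G.Adj v u := by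
  simp [cnbr]

lemma self_mem_cnbr (v : V) : v ∈ cnbr G v := by simp [cnbr]

lemma adj_mem_cnbr {v u : V} (h : G.Adj v u) : u ∈ cnbr G v := mem_cnbr.2 (Or.inr h)

/-- sets with the "pre-block" property -/
def PropSet (G : SimpleGraph V) (S : Set V) : Prop :=
  S.Nonempty ∧ (G.induce S).Connected ∧ NoCutVertexWithin G S

lemma IsBlock.propSet {B : Set V} (h : IsBlock G B) : PropSet G B := h.1

lemma IsBlock.maxOf {B S : Set V} (hB : IsBlock G B) (hS : PropSet G S) (hsub : B ⊆ S) :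
    B = S := hB.2 S hS.1 hS.2.1 hS.2.2 hsub

/-- a nonempty clique induces a connected graph -/
lemma clique_connected {S : Set V} (hne : S.Nonempty)
    (hcl : ∀ u ∈ S, ∀ v ∈ S, u ≠ v → G.Adj u v) : (G.induce S).Connected := by
  haveI : Nonempty S := ⟨⟨hne.choose, hne.choose_spec⟩⟩
  refine SimpleGraph.Connected.mk (fun a b => ?_)
  rcases eq_or_ne a b with rfl | hab
  · exact Reachable.refl _
  · refine Adj.reachable ?_
    have : G.Adj a.1 b.1 := hcl a.1 a.2 b.1 b.2 (fun h => hab (Subtype.ext h))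
    exact this

/-- a nonempty clique is a PropSet -/
lemma clique_propSet {S : Set V} (hne : S.Nonempty)
    (hcl : ∀ u ∈ S, ∀ v ∈ S, u ≠ v → G.Adj u v) : PropSet G S := by
  refine ⟨hne, clique_connected hne hcl, fun v hv hne' => ?_⟩
  exact clique_connected hne' (fun a ha b hb hab => hcl a ha.1 b hb.1 hab)



variable {G : SimpleGraph V}

/-- reachability within an induced subgraph from a walk whose support stays inside -/
lemma reach_in_set {S : Set V} {a b : V} (p : G.Walk a b)
    (hp : ∀ v ∈ p.support, v ∈ S) (ha : a ∈ S) (hb : b ∈ S) :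
    (G.induce S).Reachable ⟨a, ha⟩ ⟨b, hb⟩ := by
  have hsub : {v | v ∈ p.support} ⊆ S := hp
  have h1 := p.connected_induce_support.preconnected
    ⟨a, p.start_mem_support⟩ ⟨b, p.end_mem_support⟩
  have := h1.map (G.induceHomOfLE hsub).toHom
  exact this

/-- a walk from inside `S` to outside `S` crosses the boundary -/
lemma exists_boundary {S : Set V} :
    ∀ {a b : V} (_p : G.Walk a b), a ∈ S → b ∉ S →
      ∃ c ∈ S, ∃ w, w ∉ S ∧ G.Adj c w := by
  intro a b p
  induction p with
  | nil => intro ha hb; exact absurd ha hb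
  | @cons u v w h q ih =>
    intro ha hb
    by_cases hv : v ∈ S
    · exact ih hv hb
    · exact ⟨u, ha, v, hv, h⟩

/-- every vertex of a connected graph with two vertices has a neighbor -/
lemma nonisolated (hconn : G.Connected) (hxy : ∃ x y : V, x ≠ y) (v : V) :
    ∃ u, G.Adj v u := by
  obtain ⟨x, y, hxy⟩ := hxy
  have hw : ∃ w : V, w ≠ v := by
    rcases eq_or_ne v x with rfl | h
    · exact ⟨y, hxy.symm⟩
    · exact ⟨x, h.symm⟩
  obtain ⟨w, hw⟩ := hw
  obtain ⟨p⟩ := hconn.preconnected v w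
  cases p with
  | nil => exact absurd rfl hw.symm
  | cons h q => exact ⟨_, h⟩

/-- walk surgery : if all neighbors of `u` lie in `N[d]`, any walk can avoid `u`. -/
lemma exists_walk_avoid {u d : V} (hdu : G.Adj d u)
    (hN : ∀ w, G.Adj u w → w = d ∨ G.Adj d w) {a b : V} (p : G.Walk a b)
    (ha : a ≠ u) (hb : b ≠ u) : ∃ q : G.Walk a b, u ∉ q.support := by
  have hdne : d ≠ u := G.ne_of_adj hdu
  suffices H : ∀ n : ℕ, ∀ a b : V, ∀ p : G.Walk a b, p.length ≤ n → a ≠ u → b ≠ u →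
      ∃ q : G.Walk a b, u ∉ q.support by
    exact H p.length a b p le_rfl ha hb
  intro n
  induction n with
  | zero =>
    intro a b p hl ha hb
    cases p with
    | nil => exact ⟨Walk.nil, by simp [Ne.symm ha]⟩
    | cons h q => simp [Walk.length_cons] at hl
  | succ n ih =>
    intro a b p hl ha hb
    cases p with
    | nil => exact ⟨Walk.nil, by simp [Ne.symm ha]⟩
    | @cons _ c _ h q =>
      by_cases hc : c = u
      · subst hc
        cases q with
        | nil => exact absurd rfl hb
        | @cons _ e _ h2 q2 =>
          have he : e ≠ c := (G.ne_of_adj h2).symm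
          have hlen : q2.length ≤ n := by
            simp only [Walk.length_cons] at hl; omega
          obtain ⟨q3, hq3⟩ := ih e b q2 hlen he hb
          have hbridge : ∃ r : G.Walk a e, c ∉ r.support := by
            rcases hN a h.symm with rfl | hda
            · rcases hN e h2 with rfl | hde
              · exact ⟨Walk.nil, by simp [Ne.symm ha]⟩
              · exact ⟨Walk.cons hde Walk.nil, by simp [Ne.symm ha, Ne.symm he]⟩
            · rcases hN e h2 with rfl | hde
              · exact ⟨Walk.cons hda.symm Walk.nil, by simp [Ne.symm ha, Ne.symm hdne]⟩
              · rcases eq_or_ne a e with rfl | hae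
                · exact ⟨Walk.nil, by simp [Ne.symm ha]⟩
                · exact ⟨Walk.cons hda.symm (Walk.cons hde Walk.nil),
                    by simp [Ne.symm ha, Ne.symm hdne, Ne.symm he]⟩
          obtain ⟨r, hr⟩ := hbridge
          refine ⟨r.append q3, ?_⟩
          rw [Walk.mem_support_append_iff]
          rintro (h' | h') <;> [exact hr h'; exact hq3 h']
      · have hlen : q.length ≤ n := by
          simp only [Walk.length_cons] at hl; omega
        obtain ⟨q', hq'⟩ := ih c b q hlen hc hb
        refine ⟨Walk.cons h q', ?_⟩
        rw [Walk.support_cons]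
        simp only [List.mem_cons]
        rintro (rfl | h') <;> [exact ha rfl; exact hq' h']

/-- a cut vertex adjacent to `d` has a neighbor outside `N[d]`. -/
lemma cut_has_outside_nbr (hconn : G.Connected) {d u : V} (hdu : G.Adj d u)
    (hcut : IsCutVertex G u) : ∃ w, G.Adj u w ∧ w ∉ cnbr G d := by
  by_contra hcon
  push_neg at hcon
  have hN : ∀ w, G.Adj u w → w = d ∨ G.Adj d w := by
    intro w hw
    have := hcon w hw
    simpa [cnbr, eq_comm] using this
  apply hcut
  rintro ⟨a, ha⟩ ⟨b, hb⟩
  simp only [Set.mem_compl_iff, Set.mem_singleton_iff] at ha hb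
  obtain ⟨p⟩ := hconn.preconnected a b
  obtain ⟨q, hq⟩ := exists_walk_avoid hdu hN p ha hb
  exact reach_in_set q (fun v hv => by
    simp only [Set.mem_compl_iff, Set.mem_singleton_iff]
    rintro rfl; exact hq hv) _ _



/-- every pre-block set is contained in a block -/
lemma exists_block_superset [Fintype V] {S : Set V} (hS : PropSet G S) :
    ∃ B : Set V, IsBlock G B ∧ S ⊆ B := by
  classical
  set P : Set ℕ := {n | ∃ T : Set V, PropSet G T ∧ S ⊆ T ∧ T.ncard = n} with hP
  have hPne : P.Nonempty := ⟨S.ncard, S, hS, subset_rfl, rfl⟩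
  have hbdd : BddAbove P := by
    refine ⟨Fintype.card V, ?_⟩
    rintro n ⟨T, _, _, rfl⟩
    simpa [Set.ncard_univ] using Set.ncard_le_ncard (Set.subset_univ T) (Set.toFinite _)
  obtain ⟨T, hT, hST, hcard⟩ := Nat.sSup_mem hPne hbdd
  refine ⟨T, ⟨hT, ?_⟩, hST⟩
  intro B' hne' hconn' hncv' hsub'
  have hB'P : B'.ncard ∈ P := ⟨B', ⟨hne', hconn', hncv'⟩, hST.trans hsub', rfl⟩
  have : B'.ncard ≤ T.ncard := hcard ▸ le_csSup hbdd hB'P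
  exact Set.eq_of_subset_of_ncard_le hsub' this (Set.toFinite _)

/-- distinct blocks of a block graph share at most one vertex -/
lemma block_inter_subsingleton (hbg : IsBlockGraph G) {B B' : Set V}
    (hB : IsBlock G B) (hB' : IsBlock G B') (hne : B ≠ B')
    {x y : V} (hxB : x ∈ B) (hxB' : x ∈ B') (hyB : y ∈ B) (hyB' : y ∈ B') : x = y := by
  by_contra hxy
  have hclB := hbg B hB
  have hclB' := hbg B' hB'
  have hunion : PropSet G (B ∪ B') := by
    refine ⟨hB.propSet.1.mono Set.subset_union_left, ?_, ?_⟩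
    · exact induce_union_connected (clique_connected hB.propSet.1 hclB).preconnected
        (clique_connected hB'.propSet.1 hclB').preconnected ⟨x, hxB, hxB'⟩
    · intro v hv hne'
      have hz : ∃ z, (z = x ∨ z = y) ∧ z ≠ v := by
        rcases eq_or_ne x v with rfl | h
        · exact ⟨y, Or.inr rfl, Ne.symm hxy⟩
        · exact ⟨x, Or.inl rfl, h⟩
      obtain ⟨z, hzxy, hzv⟩ := hz
      have hzB : z ∈ B ∧ z ∈ B' := by
        rcases hzxy with rfl | rfl
        · exact ⟨hxB, hxB'⟩
        · exact ⟨hyB, hyB'⟩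
      have hrw : (B ∪ B') \ {v} = (B \ {v}) ∪ (B' \ {v}) := by
        ext w; simp [Set.mem_diff, Set.mem_union]; tauto
      rw [hrw]
      have hc1 : ∀ (C : Set V), (∀ u ∈ C, ∀ w ∈ C, u ≠ w → G.Adj u w) →
          (C \ {v}).Nonempty → (G.induce (C \ {v})).Connected := by
        intro C hcl hCne
        exact clique_connected hCne (fun a ha b hb hab => hcl a ha.1 b hb.1 hab)
      rcases Set.eq_empty_or_nonempty (B \ {v}) with hBe | hBne
      · rw [hBe, Set.empty_union]
        apply hc1 B' hclB'
        rw [hrw] at hne'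
        rwa [hBe, Set.empty_union] at hne'
      rcases Set.eq_empty_or_nonempty (B' \ {v}) with hB'e | hB'ne
      · rw [hB'e, Set.union_empty]
        exact hc1 B hclB hBne
      · exact induce_union_connected (hc1 B hclB hBne).preconnected (hc1 B' hclB' hB'ne).preconnected
          ⟨z, ⟨hzB.1, hzv⟩, ⟨hzB.2, hzv⟩⟩
  have h1 : B = B ∪ B' := hB.maxOf hunion Set.subset_union_left
  have h2 : B' ⊆ B := by rw [h1]; exact Set.subset_union_right
  exact hne ((hB'.maxOf hB.propSet h2).symm)

/-- every block containing a vertex with a neighbor has a second vertex -/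
lemma block_second_vertex {B : Set V} (hB : IsBlock G B) {b : V} (hb : b ∈ B)
    (hnb : ∃ u, G.Adj b u) : ∃ c ∈ B, c ≠ b := by
  by_contra hcon
  push_neg at hcon
  have hBb : B = {b} := Set.eq_singleton_iff_unique_mem.2 ⟨hb, hcon⟩
  obtain ⟨u, hu⟩ := hnb
  have hub : u ≠ b := (G.ne_of_adj hu).symm
  have hP : PropSet G {b, u} := by
    refine clique_propSet ⟨b, Or.inl rfl⟩ ?_
    rintro a (rfl | rfl) c (rfl | rfl) hac
    · exact absurd rfl hac
    · exact hu
    · exact hu.symm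
    · exact absurd rfl hac
  have := hB.maxOf hP (by rw [hBb]; simp)
  rw [hBb] at this
  have : u ∈ ({b} : Set V) := this ▸ (Or.inr rfl : u ∈ ({b, u} : Set V))
  exact hub (by simpa using this)



lemma singleton_connected (x : V) : (G.induce {x}).Connected :=
  clique_connected ⟨x, rfl⟩ (by rintro a rfl b rfl h; exact absurd rfl h)

/-- key technical helper : removing one vertex from (an induced path plus an apex
adjacent to both "entry" and final endpoint) keeps the rest connected. -/
lemma remove_one_connected {x b : V} {c : V} (q : G.Walk c b) :
    ∀ A : Set V, q.IsPath → (∀ u ∈ q.support, u ∉ A) →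
      x ∈ A → G.Adj x b → (∃ y ∈ A, G.Adj y c) → (G.induce A).Connected →
      ∀ v ∈ q.support, (G.induce ((A ∪ {u | u ∈ q.support}) \ {v})).Connected := by
  induction q with
  | nil =>
    intro A _ hdisj hxA _ _ hAconn v hv
    simp only [Walk.support_nil, List.mem_singleton] at hv
    subst hv
    have hbA : v ∉ A := hdisj v (by simp)
    have : (A ∪ {u | u ∈ (Walk.nil : G.Walk v v).support}) \ {v} = A := by
      ext u
      simp only [Walk.support_nil, List.mem_singleton, Set.mem_diff, Set.mem_union,
        Set.mem_setOf_eq, Set.mem_singleton_iff]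
      constructor
      · rintro ⟨hu | rfl, hne⟩; exact hu; exact absurd rfl hne
      · intro hu; exact ⟨Or.inl hu, fun h => hbA (h ▸ hu)⟩
    rw [this]; exact hAconn
  | @cons c z _ h2 t ih =>
    intro A hpath hdisj hxA hxb hpred hAconn v hv
    have hct : c ∉ t.support := by
      have := hpath.support_nodup
      rw [Walk.support_cons] at this
      exact (List.nodup_cons.mp this).1
    have htpath : t.IsPath := hpath.of_cons
    have hcA : c ∉ A := hdisj c (by simp)
    rw [Walk.support_cons] at hv
    rcases List.mem_cons.mp hv with rfl | hvt
    · -- removing c itself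
      have hset : (A ∪ {u | u ∈ (Walk.cons h2 t).support}) \ {v} =
          A ∪ {u | u ∈ t.support} := by
        ext u
        simp only [Walk.support_cons, List.mem_cons, Set.mem_diff, Set.mem_union,
          Set.mem_setOf_eq, Set.mem_singleton_iff]
        constructor
        · rintro ⟨hu | rfl | hu, hne⟩
          · exact Or.inl hu
          · exact absurd rfl hne
          · exact Or.inr hu
        · intro hu
          refine ⟨hu.imp id Or.inr, ?_⟩
          rintro rfl
          rcases hu with hu | hu
          · exact hcA hu
          · exact hct hu
      rw [hset]
      exact connected_induce_union hAconn.preconnected t.connected_induce_support.preconnected hxA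
        t.end_mem_support hxb
    · -- removing a vertex of t : use ih with A' = insert c A
      have hA'conn : (G.induce (insert c A)).Connected := by
        obtain ⟨y, hyA, hyc⟩ := hpred
        have := connected_induce_union hAconn.preconnected (G := G) (singleton_connected c).preconnected
          hyA rfl hyc
        rwa [Set.union_singleton] at this
      have hres := ih (insert c A) htpath
        (fun u hu => by
          simp only [Set.mem_insert_iff]
          push_neg
          exact ⟨fun h => hct (h ▸ hu), hdisj u (by rw [Walk.support_cons]; exact List.mem_cons_of_mem _ hu)⟩)
        (Set.mem_insert_of_mem _ hxA) hxb ⟨c, Set.mem_insert _ _, h2⟩ hA'conn v hvt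
      have hset : (insert c A ∪ {u | u ∈ t.support}) \ {v} =
          (A ∪ {u | u ∈ (Walk.cons h2 t).support}) \ {v} := by
        ext u
        simp only [Walk.support_cons, List.mem_cons, Set.mem_diff, Set.mem_union,
          Set.mem_setOf_eq, Set.mem_insert_iff, Set.mem_singleton_iff]
        tauto
      rwa [hset] at hres

/-- in a block graph, the closed neighborhood of a non-cut-vertex is a clique -/
lemma not_cut_adj [Fintype V] (hconn : G.Connected) (hbg : IsBlockGraph G) {x a b : V}
    (hx : ¬ IsCutVertex G x) (ha : G.Adj x a) (hb : G.Adj x b) (hab : a ≠ b) :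
    G.Adj a b := by
  classical
  have hpre : (G.induce ({x}ᶜ : Set V)).Preconnected := not_not.mp hx
  have hax : a ≠ x := (G.ne_of_adj ha).symm
  have hbx : b ≠ x := (G.ne_of_adj hb).symm
  obtain ⟨W⟩ := hpre ⟨a, by simp [hax]⟩ ⟨b, by simp [hbx]⟩
  let p0 : G.Walk a b := W.map (SimpleGraph.Embedding.induce ({x}ᶜ : Set V)).toHom
  have hx0 : x ∉ p0.support := by
    intro hmem
    have hmem' : x ∈ (W.map (SimpleGraph.Embedding.induce ({x}ᶜ : Set V)).toHom).support :=
      hmem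
    rw [Walk.support_map] at hmem'
    obtain ⟨y, _, hy2⟩ := List.mem_map.mp hmem'
    have : y.1 ∈ ({x}ᶜ : Set V) := y.2
    simp only [Set.mem_compl_iff, Set.mem_singleton_iff] at this
    exact this hy2
  set q := p0.toPath with hq
  have hxq : x ∉ q.1.support := fun h => hx0 (p0.support_toPath_subset h)
  set w : G.Walk x b := Walk.cons ha q.1 with hw
  set S : Set V := {v | v ∈ w.support} with hS
  have hSeq : S = insert x {u | u ∈ q.1.support} := by
    ext u; simp [hS, hw, Walk.support_cons]
  have hprop : PropSet G S := by
    refine ⟨⟨x, w.start_mem_support⟩, w.connected_induce_support, ?_⟩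
    intro v hv _
    have hv' : v = x ∨ v ∈ q.1.support := by
      have : v ∈ w.support := hv
      rw [hw, Walk.support_cons] at this
      exact List.mem_cons.mp this
    rcases hv' with rfl | hvq
    · have : S \ {v} = {u | u ∈ q.1.support} := by
        rw [hSeq]
        ext u
        simp only [Set.mem_diff, Set.mem_insert_iff, Set.mem_setOf_eq,
          Set.mem_singleton_iff]
        constructor
        · rintro ⟨rfl | hu, hne⟩; exact absurd rfl hne; exact hu
        · intro hu; exact ⟨Or.inr hu, fun h => hxq (h ▸ hu)⟩
      rw [this]
      exact q.1.connected_induce_support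
    · have hres := remove_one_connected q.1 {x} q.2
        (fun u hu => by simp; rintro rfl; exact hxq hu)
        rfl hb ⟨x, rfl, ha⟩ (singleton_connected x) v hvq
      have hset : ({x} ∪ {u | u ∈ q.1.support}) \ {v} = S \ {v} := by
        rw [hSeq]; ext u
        simp only [Set.mem_diff, Set.mem_union, Set.mem_setOf_eq, Set.mem_insert_iff,
          Set.mem_singleton_iff]
      rwa [hset] at hres
  obtain ⟨B, hB, hSB⟩ := exists_block_superset hprop
  have haS : a ∈ S := by
    rw [hSeq]; exact Or.inr q.1.start_mem_support
  have hbS : b ∈ S := by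
    rw [hSeq]; exact Or.inr q.1.end_mem_support
  exact hbg B hB a (hSB haS) b (hSB hbS) hab



lemma two_vertices (h2b : ∃ B₁ B₂ : Set V, IsBlock G B₁ ∧ IsBlock G B₂ ∧ B₁ ≠ B₂) :
    ∃ x y : V, x ≠ y := by
  obtain ⟨B1, B2, hB1, hB2, hne⟩ := h2b
  have hns : ¬ B1 ⊆ B2 := fun h => hne (hB1.maxOf hB2.propSet h)
  obtain ⟨v, _, hv2⟩ := Set.not_subset.mp hns
  obtain ⟨u, hu⟩ := hB2.propSet.1
  exact ⟨v, u, fun h => hv2 (h ▸ hu)⟩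

lemma not_cut_cnbr_clique [Fintype V] (hconn : G.Connected) (hbg : IsBlockGraph G)
    {x : V} (hx : ¬ IsCutVertex G x) :
    ∀ a ∈ cnbr G x, ∀ b ∈ cnbr G x, a ≠ b → G.Adj a b := by
  intro a ha b hb hab
  rcases mem_cnbr.mp ha with rfl | ha'
  · rcases mem_cnbr.mp hb with rfl | hb'
    · exact absurd rfl hab
    · exact hb'
  · rcases mem_cnbr.mp hb with rfl | hb'
    · exact ha'.symm
    · exact not_cut_adj hconn hbg hx ha' hb' hab

lemma block_eq_cnbr_of_not_cut [Fintype V] (hconn : G.Connected) (hbg : IsBlockGraph G)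
    {B : Set V} {x : V} (hB : IsBlock G B) (hx : ¬ IsCutVertex G x) (hxB : x ∈ B) :
    B = cnbr G x := by
  apply hB.maxOf (clique_propSet ⟨x, self_mem_cnbr x⟩ (not_cut_cnbr_clique hconn hbg hx))
  intro z hz
  rcases eq_or_ne z x with rfl | hzx
  · exact self_mem_cnbr z
  · exact adj_mem_cnbr (hbg B hB x hxB z hz hzx.symm)

lemma cnbr_isBlock [Fintype V] (hconn : G.Connected) (hbg : IsBlockGraph G)
    {x : V} (hx : ¬ IsCutVertex G x) : IsBlock G (cnbr G x) := by
  have hprop := clique_propSet (G := G) ⟨x, self_mem_cnbr x⟩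
    (not_cut_cnbr_clique hconn hbg hx)
  refine ⟨hprop, ?_⟩
  intro B' hne' hconn' hncv' hsub'
  obtain ⟨B'', hB'', hsub''⟩ := exists_block_superset ⟨hne', hconn', hncv'⟩
  have hx'' : x ∈ B'' := hsub'' (hsub' (self_mem_cnbr x))
  have heq : B'' = cnbr G x := block_eq_cnbr_of_not_cut hconn hbg hB'' hx hx''
  exact Set.Subset.antisymm hsub' (hsub''.trans heq.subset)

lemma boundary_cut [Fintype V] (hconn : G.Connected) (hbg : IsBlockGraph G)
    {B : Set V} {c w : V} (hB : IsBlock G B) (hc : c ∈ B)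
    (hw : w ∉ B) (hcw : G.Adj c w) : IsCutVertex G c := by
  by_contra hx
  have hBc := block_eq_cnbr_of_not_cut hconn hbg hB hx hc
  exact hw (hBc ▸ adj_mem_cnbr hcw)

lemma exists_gamma_set [Fintype V] (G : SimpleGraph V) :
    ∃ D : Set V, IsDomSet G D ∧ D.ncard = domNum G := by
  have hne : {n | ∃ S : Set V, IsDomSet G S ∧ S.ncard = n}.Nonempty :=
    ⟨(Set.univ : Set V).ncard, Set.univ, fun v hv => absurd (Set.mem_univ v) hv, rfl⟩
  obtain ⟨S, hS, hcard⟩ := Nat.sInf_mem hne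
  exact ⟨S, hS, hcard⟩

lemma domNum_le {S : Set V} (hS : IsDomSet G S) : domNum G ≤ S.ncard :=
  Nat.sInf_le ⟨S, hS, rfl⟩

lemma totalDomNum_le {S : Set V} (hS : IsTotalDomSet G S) : totalDomNum G ≤ S.ncard :=
  Nat.sInf_le ⟨S, hS, rfl⟩

lemma exists_gammaT_set (hni : ∀ v : V, ∃ u, G.Adj v u) :
    ∃ T : Set V, IsTotalDomSet G T ∧ T.ncard = totalDomNum G := by
  have hne : {n | ∃ S : Set V, IsTotalDomSet G S ∧ S.ncard = n}.Nonempty :=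
    ⟨(Set.univ : Set V).ncard, Set.univ,
      fun v => ⟨(hni v).choose, Set.mem_univ _, ((hni v).choose_spec).symm⟩, rfl⟩
  obtain ⟨S, hS, hcard⟩ := Nat.sInf_mem hne
  exact ⟨S, hS, hcard⟩

lemma tdn_le_two_dn [Fintype V] (hni : ∀ v : V, ∃ u, G.Adj v u) :
    totalDomNum G ≤ 2 * domNum G := by
  classical
  obtain ⟨D, hD, hcard⟩ := exists_gamma_set G
  choose f hf using hni
  have hT : IsTotalDomSet G (D ∪ f '' D) := by
    intro v
    by_cases hv : v ∈ D
    · exact ⟨f v, Or.inr ⟨v, hv, rfl⟩, (hf v).symm⟩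
    · obtain ⟨u, hu, huv⟩ := hD v hv
      exact ⟨u, Or.inl hu, huv⟩
  calc totalDomNum G ≤ (D ∪ f '' D).ncard := totalDomNum_le hT
    _ ≤ D.ncard + (f '' D).ncard := Set.ncard_union_le _ _
    _ ≤ D.ncard + D.ncard := by
        have := Set.ncard_image_le (f := f) (s := D) (Set.toFinite D)
        omega
    _ = 2 * domNum G := by omega

lemma IsPacking.eq_of_mem_cnbr {D : Set V} (hp : IsPacking G D) {d d' v : V}
    (hd : d ∈ D) (hd' : d' ∈ D) (h1 : v ∈ cnbr G d) (h2 : v ∈ cnbr G d') : d = d' := by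
  by_contra hne
  exact Set.disjoint_left.mp (hp hd hd' hne) h1 h2

lemma IsPacking.not_adj {D : Set V} (hp : IsPacking G D) {d d' : V}
    (hd : d ∈ D) (hd' : d' ∈ D) (hne : d ≠ d') : ¬ G.Adj d d' := fun h =>
  hne (hp.eq_of_mem_cnbr hd hd' (adj_mem_cnbr h) (self_mem_cnbr d'))

lemma two_in_cells [Fintype V] {D T : Set V} (hp : IsPacking G D)
    (h2 : ∀ d ∈ D, ∃ t1 t2 : V, t1 ≠ t2 ∧ (t1 ∈ T ∧ t1 ∈ cnbr G d) ∧
      (t2 ∈ T ∧ t2 ∈ cnbr G d)) :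
    2 * D.ncard ≤ T.ncard := by
  classical
  have hcell : ∀ d ∈ D.toFinset, 2 ≤ ((T ∩ cnbr G d).toFinset).card := by
    intro d hd
    rw [Set.mem_toFinset] at hd
    obtain ⟨t1, t2, hne, h1, h2⟩ := h2 d hd
    have h1' : t1 ∈ (T ∩ cnbr G d).toFinset := by
      rw [Set.mem_toFinset]; exact ⟨h1.1, h1.2⟩
    have h2' : t2 ∈ (T ∩ cnbr G d).toFinset := by
      rw [Set.mem_toFinset]; exact ⟨h2.1, h2.2⟩
    have := Finset.one_lt_card.mpr ⟨t1, h1', t2, h2', hne⟩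
    omega
  have hdisj : ∀ d1 ∈ D.toFinset, ∀ d2 ∈ D.toFinset, d1 ≠ d2 →
      Disjoint ((T ∩ cnbr G d1).toFinset) ((T ∩ cnbr G d2).toFinset) := by
    intro d1 h1 d2 h2 hne
    rw [Set.mem_toFinset] at h1 h2
    rw [Finset.disjoint_left]
    intro a ha hb
    rw [Set.mem_toFinset] at ha hb
    exact hne (hp.eq_of_mem_cnbr h1 h2 ha.2 hb.2)
  have hsub : D.toFinset.biUnion (fun d => (T ∩ cnbr G d).toFinset) ⊆ T.toFinset := by
    intro a ha
    rw [Finset.mem_biUnion] at ha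
    obtain ⟨d, _, ha⟩ := ha
    rw [Set.mem_toFinset] at ha ⊢
    exact ha.1
  have hcount : 2 * D.toFinset.card ≤ T.toFinset.card := by
    calc 2 * D.toFinset.card = ∑ _d ∈ D.toFinset, 2 := by
          rw [Finset.sum_const, smul_eq_mul, mul_comm]
      _ ≤ ∑ d ∈ D.toFinset, ((T ∩ cnbr G d).toFinset).card :=
          Finset.sum_le_sum hcell
      _ = (D.toFinset.biUnion (fun d => (T ∩ cnbr G d).toFinset)).card :=
          (Finset.card_biUnion hdisj).symm
      _ ≤ T.toFinset.card := Finset.card_le_card hsub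
  rwa [Set.ncard_eq_toFinset_card' D, Set.ncard_eq_toFinset_card' T]

lemma block_subset_cnbr (hbg : IsBlockGraph G) {B : Set V} (hB : IsBlock G B) {d : V}
    (hd : d ∈ B) : B ⊆ cnbr G d := by
  intro z hz
  rcases eq_or_ne z d with rfl | hzd
  · exact self_mem_cnbr z
  · exact adj_mem_cnbr (hbg B hB d hd z hz hzd.symm)

lemma two_in_cell_of_D1D2 [Fintype V] (hconn : G.Connected) (hbg : IsBlockGraph G)
    (hni : ∀ v : V, ∃ u, G.Adj v u) {T : Set V} (hT : IsTotalDomSet G T) {d : V}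
    (hd12 : d ∈ D1set G ∪ D2set G) :
    ∃ t1 t2 : V, t1 ≠ t2 ∧ (t1 ∈ T ∧ t1 ∈ cnbr G d) ∧ (t2 ∈ T ∧ t2 ∈ cnbr G d) := by
  have hpair : d ∈ T → ∃ t1 t2 : V, t1 ≠ t2 ∧ (t1 ∈ T ∧ t1 ∈ cnbr G d) ∧
      (t2 ∈ T ∧ t2 ∈ cnbr G d) := by
    intro hdT
    obtain ⟨t0, ht0T, ht0d⟩ := hT d
    exact ⟨d, t0, (G.ne_of_adj ht0d).symm, ⟨hdT, self_mem_cnbr d⟩,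
      ⟨ht0T, adj_mem_cnbr ht0d.symm⟩⟩
  rcases hd12 with hd1 | hd2
  · obtain ⟨hcutd, B, hB, hdB, huniq⟩ := hd1
    obtain ⟨u, huB, hune⟩ := block_second_vertex hB hdB (hni d)
    have hu_notcut : ¬ IsCutVertex G u := fun hc => hune (huniq u huB hc)
    have hBu : B = cnbr G u := block_eq_cnbr_of_not_cut hconn hbg hB hu_notcut huB
    have hBsub : B ⊆ cnbr G d := block_subset_cnbr hbg hB hdB
    obtain ⟨t1, ht1T, ht1u⟩ := hT u
    have ht1B : t1 ∈ B := by rw [hBu]; exact adj_mem_cnbr ht1u.symm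
    rcases eq_or_ne t1 d with rfl | ht1d
    · exact hpair ht1T
    · have ht1_notcut : ¬ IsCutVertex G t1 := fun hc => ht1d (huniq t1 ht1B hc)
      have hBt1 : B = cnbr G t1 := block_eq_cnbr_of_not_cut hconn hbg hB ht1_notcut ht1B
      obtain ⟨t2, ht2T, ht2t1⟩ := hT t1
      have ht2B : t2 ∈ B := by rw [hBt1]; exact adj_mem_cnbr ht2t1.symm
      exact ⟨t1, t2, (G.ne_of_adj ht2t1).symm, ⟨ht1T, hBsub ht1B⟩, ⟨ht2T, hBsub ht2B⟩⟩
  · obtain ⟨hcutd, x, y, hxy, hdx, hdy, hxnc, hync, Bx, By, hBx, hBy, hxBx, hyBy, hBne⟩ := hd2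
    have hBxx : Bx = cnbr G x := block_eq_cnbr_of_not_cut hconn hbg hBx hxnc hxBx
    have hByy : By = cnbr G y := block_eq_cnbr_of_not_cut hconn hbg hBy hync hyBy
    have hdBx : d ∈ Bx := by rw [hBxx]; exact adj_mem_cnbr hdx.symm
    have hdBy : d ∈ By := by rw [hByy]; exact adj_mem_cnbr hdy.symm
    have hBxsub : Bx ⊆ cnbr G d := block_subset_cnbr hbg hBx hdBx
    have hBysub : By ⊆ cnbr G d := block_subset_cnbr hbg hBy hdBy
    obtain ⟨t1, ht1T, ht1x⟩ := hT x
    have ht1Bx : t1 ∈ Bx := by rw [hBxx]; exact adj_mem_cnbr ht1x.symm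
    obtain ⟨t2, ht2T, ht2y⟩ := hT y
    have ht2By : t2 ∈ By := by rw [hByy]; exact adj_mem_cnbr ht2y.symm
    rcases eq_or_ne t1 t2 with rfl | hne
    · have ht1d : t1 = d :=
        block_inter_subsingleton hbg hBx hBy hBne ht1Bx ht2By hdBx hdBy
      exact hpair (ht1d ▸ ht1T)
    · exact ⟨t1, t2, hne, ⟨ht1T, hBxsub ht1Bx⟩, ⟨ht2T, hBysub ht2By⟩⟩

/-- the backward direction of the main theorem -/
lemma backward_dir [Fintype V] (hconn : G.Connected) (hbg : IsBlockGraph G)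
    (h2b : ∃ B₁ B₂ : Set V, IsBlock G B₁ ∧ IsBlock G B₂ ∧ B₁ ≠ B₂)
    {D : Set V} (hmin : IsMinDomSet G D) (heq : D = D1set G ∪ D2set G)
    (hp : IsPacking G D) : totalDomNum G = 2 * domNum G := by
  have hni := nonisolated hconn (two_vertices h2b)
  refine le_antisymm (tdn_le_two_dn hni) ?_
  obtain ⟨T, hT, hTcard⟩ := exists_gammaT_set hni
  calc 2 * domNum G = 2 * D.ncard := by rw [hmin.2]
    _ ≤ T.ncard := two_in_cells hp (fun d hd =>
        two_in_cell_of_D1D2 hconn hbg hni hT (heq ▸ hd))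
    _ = totalDomNum G := hTcard

/-- if `γₜ = 2γ` then every minimum dominating set is a packing -/
lemma gamma_set_packing [Fintype V] (hni : ∀ v : V, ∃ u, G.Adj v u)
    (hγ2 : totalDomNum G = 2 * domNum G) {D : Set V} (hD : IsDomSet G D)
    (hcard : D.ncard = domNum G) : IsPacking G D := by
  classical
  by_contra hnp
  unfold IsPacking Set.Pairwise at hnp
  push_neg at hnp
  obtain ⟨d1, hd1, d2, hd2, hne, hnd⟩ := hnp
  obtain ⟨z, hz1, hz2⟩ := Set.not_disjoint_iff.mp hnd
  choose f hf using hni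
  set T : Set V := D ∪ {z} ∪ f '' (D \ {d1, d2}) with hTdef
  have hTtd : IsTotalDomSet G T := by
    have hz1' : z = d1 ∨ G.Adj d1 z := mem_cnbr.mp hz1
    have hz2' : z = d2 ∨ G.Adj d2 z := mem_cnbr.mp hz2
    have hzT : z ∈ T := Or.inl (Or.inr rfl)
    have key : ∀ a b : V, a ∈ D → b ∈ D → a ≠ b → (z = a ∨ G.Adj a z) →
        (z = b ∨ G.Adj b z) → ∃ u ∈ T, G.Adj u a := by
      intro a b _ hbD hab hza hzb
      rcases hza with hza | hza
      · rcases hzb with hzb | hzb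
        · exact absurd (hza.symm.trans hzb) hab
        · exact ⟨b, Or.inl (Or.inl hbD), by rwa [hza] at hzb⟩
      · exact ⟨z, hzT, hza.symm⟩
    intro v
    by_cases hvD : v ∈ D
    · rcases eq_or_ne v d1 with rfl | hvd1
      · exact key v d2 hd1 hd2 hne hz1' hz2'
      rcases eq_or_ne v d2 with rfl | hvd2
      · exact key v d1 hd2 hd1 hne.symm hz2' hz1'
      · exact ⟨f v, Or.inr ⟨v, ⟨hvD, by simp [hvd1, hvd2]⟩, rfl⟩, (hf v).symm⟩
    · obtain ⟨u, hu, huv⟩ := hD v hvD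
      exact ⟨u, Or.inl (Or.inl hu), huv⟩
  have hsubD : ({d1, d2} : Set V) ⊆ D := by
    rintro a (rfl | rfl) <;> [exact hd1; exact hd2]
  have h2D : 2 ≤ D.ncard := by
    have := Set.ncard_le_ncard hsubD (Set.toFinite D)
    rwa [Set.ncard_pair hne] at this
  have hdiff : (D \ {d1, d2}).ncard = D.ncard - 2 := by
    rw [Set.ncard_diff hsubD, Set.ncard_pair hne]
  have hTcard : T.ncard ≤ 2 * D.ncard - 1 := by
    calc T.ncard ≤ (D ∪ {z}).ncard + (f '' (D \ {d1, d2})).ncard :=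
          Set.ncard_union_le _ _
      _ ≤ (D.ncard + 1) + (D \ {d1, d2}).ncard := by
          have h1 : (D ∪ {z}).ncard ≤ D.ncard + ({z} : Set V).ncard :=
            Set.ncard_union_le _ _
          have h2 := Set.ncard_image_le (f := f) (s := D \ {d1, d2})
            (Set.toFinite _)
          simp only [Set.ncard_singleton] at h1
          omega
      _ ≤ 2 * D.ncard - 1 := by omega
  have := totalDomNum_le hTtd
  rw [hγ2, hcard] at *
  omega

/-- if `γₜ = 2γ` then every member of a minimum dominating set is a cut vertex -/
lemma gamma_mem_cut [Fintype V] (hconn : G.Connected) (hbg : IsBlockGraph G)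
    (h2b : ∃ B₁ B₂ : Set V, IsBlock G B₁ ∧ IsBlock G B₂ ∧ B₁ ≠ B₂)
    (hγ2 : totalDomNum G = 2 * domNum G) {D : Set V} (hD : IsDomSet G D)
    (hcard : D.ncard = domNum G) {d : V} (hdD : d ∈ D) : IsCutVertex G d := by
  classical
  have hni := nonisolated hconn (two_vertices h2b)
  have hp := gamma_set_packing hni hγ2 hD hcard
  by_contra hnc
  have hBd : IsBlock G (cnbr G d) := cnbr_isBlock hconn hbg hnc
  obtain ⟨B1, B2, hB1, hB2, hBne⟩ := h2b
  have hex : ∃ B' : Set V, IsBlock G B' ∧ B' ≠ cnbr G d := by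
    rcases eq_or_ne B1 (cnbr G d) with rfl | h
    · exact ⟨B2, hB2, hBne.symm⟩
    · exact ⟨B1, hB1, h⟩
  obtain ⟨B', hB', hB'ne⟩ := hex
  have hnsub : ¬ B' ⊆ cnbr G d := fun h => hB'ne (hB'.maxOf hBd.propSet h)
  obtain ⟨z, _, hznb⟩ := Set.not_subset.mp hnsub
  obtain ⟨p⟩ := hconn.preconnected d z
  obtain ⟨c, hc_mem, w, hw_nmem, hcw⟩ := exists_boundary p (self_mem_cnbr d) hznb
  have hcd : c ≠ d := fun h => hw_nmem (adj_mem_cnbr (h ▸ hcw))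
  have hcdadj : G.Adj d c := (mem_cnbr.mp hc_mem).resolve_left hcd
  have hcD : c ∉ D := fun hcD' => (hp.not_adj hdD hcD' (Ne.symm hcd)) hcdadj
  set D' : Set V := insert c (D \ {d}) with hD'def
  have hD'dom : IsDomSet G D' := by
    intro v hv
    simp only [hD'def, Set.mem_insert_iff, Set.mem_diff, Set.mem_singleton_iff,
      not_or, not_and, not_not] at hv
    obtain ⟨hvc, hvDd⟩ := hv
    by_cases hvD : v ∈ D
    · have hvd : v = d := hvDd hvD
      subst hvd
      exact ⟨c, Set.mem_insert _ _, hcdadj.symm⟩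
    · obtain ⟨u, huD, huv⟩ := hD v hvD
      rcases eq_or_ne u d with rfl | hud
      · have hvmem : v ∈ cnbr G u := adj_mem_cnbr huv
        have : G.Adj c v := not_cut_cnbr_clique hconn hbg hnc c hc_mem v hvmem
          (fun h => hvc h.symm)
        exact ⟨c, Set.mem_insert _ _, this⟩
      · exact ⟨u, Set.mem_insert_of_mem _ ⟨huD, hud⟩, huv⟩
  have hD'card : D'.ncard = domNum G := by
    have h1 : (D \ {d}).ncard = D.ncard - 1 :=
      Set.ncard_diff_singleton_of_mem hdD
    have h2 : D'.ncard ≤ (D \ {d}).ncard + 1 := Set.ncard_insert_le _ _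
    have h3 : 0 < D.ncard := (Set.ncard_pos (Set.toFinite D)).mpr ⟨d, hdD⟩
    have h4 : domNum G ≤ D'.ncard := domNum_le hD'dom
    omega
  have hp' := gamma_set_packing hni hγ2 hD'dom hD'card
  have hcD' : c ∈ D' := Set.mem_insert _ _
  by_cases hwD : w ∈ D
  · have hwd : w ≠ d := fun h => hw_nmem (by rw [h]; exact self_mem_cnbr d)
    have hwD' : w ∈ D' := Set.mem_insert_of_mem _ ⟨hwD, hwd⟩
    exact (hp'.not_adj hcD' hwD' (fun h => hw_nmem (h ▸ hc_mem))) hcw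
  · obtain ⟨e, heD, hew⟩ := hD w hwD
    have hed : e ≠ d := fun h => hw_nmem (adj_mem_cnbr (h ▸ hew))
    have hec : e ≠ c := fun h => hcD (h ▸ heD)
    have heD' : e ∈ D' := Set.mem_insert_of_mem _ ⟨heD, hed⟩
    exact hec.symm (hp'.eq_of_mem_cnbr hcD' heD' (adj_mem_cnbr hcw) (adj_mem_cnbr hew))

/-- if `γₜ = 2γ` then `D₁ ∪ D₂` is contained in every minimum dominating set -/
lemma D1D2_subset_gamma [Fintype V] (hconn : G.Connected) (hbg : IsBlockGraph G)
    (h2b : ∃ B₁ B₂ : Set V, IsBlock G B₁ ∧ IsBlock G B₂ ∧ B₁ ≠ B₂)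
    (hγ2 : totalDomNum G = 2 * domNum G) {D : Set V} (hD : IsDomSet G D)
    (hcard : D.ncard = domNum G) : D1set G ∪ D2set G ⊆ D := by
  have hni := nonisolated hconn (two_vertices h2b)
  have hp := gamma_set_packing hni hγ2 hD hcard
  rintro v (hv1 | hv2)
  · obtain ⟨hcutv, B, hB, hvB, huniq⟩ := hv1
    obtain ⟨u, huB, hune⟩ := block_second_vertex hB hvB (hni v)
    have hunc : ¬ IsCutVertex G u := fun hc => hune (huniq u huB hc)
    have hBu : B = cnbr G u := block_eq_cnbr_of_not_cut hconn hbg hB hunc huB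
    by_cases huD : u ∈ D
    · exact absurd (gamma_mem_cut hconn hbg h2b hγ2 hD hcard huD) hunc
    obtain ⟨e, heD, heu⟩ := hD u huD
    have heB : e ∈ B := by rw [hBu]; exact adj_mem_cnbr heu.symm
    have hev : e = v := huniq e heB (gamma_mem_cut hconn hbg h2b hγ2 hD hcard heD)
    exact hev ▸ heD
  · obtain ⟨hcutv, x, y, hxy, hvx, hvy, hxnc, hync, Bx, By, hBx, hBy, hxBx, hyBy, hBne⟩ := hv2
    have hBxx : Bx = cnbr G x := block_eq_cnbr_of_not_cut hconn hbg hBx hxnc hxBx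
    have hByy : By = cnbr G y := block_eq_cnbr_of_not_cut hconn hbg hBy hync hyBy
    have hvBx : v ∈ Bx := by rw [hBxx]; exact adj_mem_cnbr hvx.symm
    have hvBy : v ∈ By := by rw [hByy]; exact adj_mem_cnbr hvy.symm
    by_cases hxD : x ∈ D
    · exact absurd (gamma_mem_cut hconn hbg h2b hγ2 hD hcard hxD) hxnc
    by_cases hyD : y ∈ D
    · exact absurd (gamma_mem_cut hconn hbg h2b hγ2 hD hcard hyD) hync
    obtain ⟨ex, hexD, hexx⟩ := hD x hxD
    have hexBx : ex ∈ Bx := by rw [hBxx]; exact adj_mem_cnbr hexx.symm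
    obtain ⟨ey, heyD, heyy⟩ := hD y hyD
    have heyBy : ey ∈ By := by rw [hByy]; exact adj_mem_cnbr heyy.symm
    rcases eq_or_ne ex v with rfl | hexv
    · exact hexD
    rcases eq_or_ne ey v with rfl | heyv
    · exact heyD
    have hexey : ex ≠ ey := by
      rintro rfl
      exact hexv (block_inter_subsingleton hbg hBx hBy hBne hexBx heyBy hvBx hvBy)
    exact absurd (hp.eq_of_mem_cnbr hexD heyD
      (adj_mem_cnbr (hbg Bx hBx ex hexBx v hvBx hexv))
      (adj_mem_cnbr (hbg By hBy ey heyBy v hvBy heyv))) hexey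

lemma walk_set_conn {S : Set V} {a b : V} (W : G.Walk a b)
    (h : S = {v | v ∈ W.support}) : (G.induce S).Connected :=
  h ▸ W.connected_induce_support

lemma cycle4_remove_first {x1 x2 x3 x4 : V}
    (a23 : G.Adj x2 x3) (a34 : G.Adj x3 x4)
    (n12 : x1 ≠ x2) (n13 : x1 ≠ x3) (n14 : x1 ≠ x4) :
    (G.induce (({x1, x2, x3, x4} : Set V) \ {x1})).Connected := by
  have hrw : (({x1, x2, x3, x4} : Set V) \ {x1}) = {x2, x3, x4} := by
    rw [Set.insert_diff_self_of_notMem (by simp [n12, n13, n14])]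
  rw [hrw]
  refine walk_set_conn (Walk.cons a23 (Walk.cons a34 Walk.nil)) ?_
  ext z
  simp only [Set.mem_insert_iff, Set.mem_singleton_iff, Walk.support_cons,
    Walk.support_nil, List.mem_cons, List.mem_singleton, Set.mem_setOf_eq]
  tauto

lemma cycle4_propSet {x1 x2 x3 x4 : V}
    (a12 : G.Adj x1 x2) (a23 : G.Adj x2 x3) (a34 : G.Adj x3 x4) (a41 : G.Adj x4 x1)
    (n13 : x1 ≠ x3) (n24 : x2 ≠ x4) :
    PropSet G ({x1, x2, x3, x4} : Set V) := by
  have n12 : x1 ≠ x2 := G.ne_of_adj a12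
  have n23 : x2 ≠ x3 := G.ne_of_adj a23
  have n34 : x3 ≠ x4 := G.ne_of_adj a34
  have n14 : x1 ≠ x4 := (G.ne_of_adj a41).symm
  refine ⟨⟨x1, by simp⟩, ?_, ?_⟩
  · refine walk_set_conn (Walk.cons a12 (Walk.cons a23 (Walk.cons a34 Walk.nil))) ?_
    ext z
    simp only [Set.mem_insert_iff, Set.mem_singleton_iff, Walk.support_cons,
      Walk.support_nil, List.mem_cons, List.mem_singleton, Set.mem_setOf_eq]
    tauto
  · intro v hv _
    simp only [Set.mem_insert_iff, Set.mem_singleton_iff] at hv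
    have hperm : ∀ y1 y2 y3 y4 : V, ({x1, x2, x3, x4} : Set V) = {y1, y2, y3, y4} →
        (G.induce (({y1, y2, y3, y4} : Set V) \ {y1})).Connected →
        (G.induce (({x1, x2, x3, x4} : Set V) \ {y1})).Connected := by
      intro y1 y2 y3 y4 hset hc
      rwa [hset]
    rcases hv with rfl | rfl | rfl | rfl
    · exact cycle4_remove_first a23 a34 n12 n13 n14
    · exact hperm v x3 x4 x1 (by ext z; simp only [Set.mem_insert_iff, Set.mem_singleton_iff]; constructor <;> rintro (rfl|rfl|rfl|rfl|rfl|rfl) <;> simp)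
        (cycle4_remove_first a34 a41 n23 n24 n12.symm)
    · exact hperm v x4 x1 x2 (by ext z; simp only [Set.mem_insert_iff, Set.mem_singleton_iff]; constructor <;> rintro (rfl|rfl|rfl|rfl|rfl|rfl) <;> simp)
        (cycle4_remove_first a41 a12 n34 n13.symm n23.symm)
    · exact hperm v x1 x2 x3 (by ext z; simp only [Set.mem_insert_iff, Set.mem_singleton_iff]; constructor <;> rintro (rfl|rfl|rfl|rfl|rfl|rfl) <;> simp)
        (cycle4_remove_first a12 a23 n14.symm n24.symm n34.symm)

lemma cycle6_remove_first {x1 x2 x3 x4 x5 x6 : V}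
    (a23 : G.Adj x2 x3) (a34 : G.Adj x3 x4) (a45 : G.Adj x4 x5) (a56 : G.Adj x5 x6)
    (n12 : x1 ≠ x2) (n13 : x1 ≠ x3) (n14 : x1 ≠ x4) (n15 : x1 ≠ x5) (n16 : x1 ≠ x6) :
    (G.induce (({x1, x2, x3, x4, x5, x6} : Set V) \ {x1})).Connected := by
  have hrw : (({x1, x2, x3, x4, x5, x6} : Set V) \ {x1}) = {x2, x3, x4, x5, x6} := by
    rw [Set.insert_diff_self_of_notMem (by simp [n12, n13, n14, n15, n16])]
  rw [hrw]
  refine walk_set_conn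
    (Walk.cons a23 (Walk.cons a34 (Walk.cons a45 (Walk.cons a56 Walk.nil)))) ?_
  ext z
  simp only [Set.mem_insert_iff, Set.mem_singleton_iff, Walk.support_cons,
    Walk.support_nil, List.mem_cons, List.mem_singleton, Set.mem_setOf_eq]
  tauto

set_option maxHeartbeats 1000000 in
lemma cycle6_propSet {x1 x2 x3 x4 x5 x6 : V}
    (a12 : G.Adj x1 x2) (a23 : G.Adj x2 x3) (a34 : G.Adj x3 x4) (a45 : G.Adj x4 x5)
    (a56 : G.Adj x5 x6) (a61 : G.Adj x6 x1)
    (n13 : x1 ≠ x3) (n14 : x1 ≠ x4) (n15 : x1 ≠ x5) (n24 : x2 ≠ x4) (n25 : x2 ≠ x5)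
    (n26 : x2 ≠ x6) (n35 : x3 ≠ x5) (n36 : x3 ≠ x6) (n46 : x4 ≠ x6) :
    PropSet G ({x1, x2, x3, x4, x5, x6} : Set V) := by
  have n12 : x1 ≠ x2 := G.ne_of_adj a12
  have n23 : x2 ≠ x3 := G.ne_of_adj a23
  have n34 : x3 ≠ x4 := G.ne_of_adj a34
  have n45 : x4 ≠ x5 := G.ne_of_adj a45
  have n56 : x5 ≠ x6 := G.ne_of_adj a56
  have n16 : x1 ≠ x6 := (G.ne_of_adj a61).symm
  refine ⟨⟨x1, by simp⟩, ?_, ?_⟩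
  · refine walk_set_conn (Walk.cons a12 (Walk.cons a23 (Walk.cons a34
      (Walk.cons a45 (Walk.cons a56 Walk.nil))))) ?_
    ext z
    simp only [Set.mem_insert_iff, Set.mem_singleton_iff, Walk.support_cons,
      Walk.support_nil, List.mem_cons, List.mem_singleton, Set.mem_setOf_eq]
    tauto
  · intro v hv _
    simp only [Set.mem_insert_iff, Set.mem_singleton_iff] at hv
    have hperm : ∀ y1 y2 y3 y4 y5 y6 : V,
        ({x1, x2, x3, x4, x5, x6} : Set V) = {y1, y2, y3, y4, y5, y6} →
        (G.induce (({y1, y2, y3, y4, y5, y6} : Set V) \ {y1})).Connected →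
        (G.induce (({x1, x2, x3, x4, x5, x6} : Set V) \ {y1})).Connected := by
      intro y1 y2 y3 y4 y5 y6 hset hc
      rwa [hset]
    rcases hv with rfl | rfl | rfl | rfl | rfl | rfl
    · exact cycle6_remove_first a23 a34 a45 a56 n12 n13 n14 n15 n16
    · exact hperm v x3 x4 x5 x6 x1 (by ext z; simp only [Set.mem_insert_iff, Set.mem_singleton_iff]; constructor <;> rintro (rfl|rfl|rfl|rfl|rfl|rfl) <;> simp)
        (cycle6_remove_first a34 a45 a56 a61 n23 n24 n25 n26 n12.symm)
    · exact hperm v x4 x5 x6 x1 x2 (by ext z; simp only [Set.mem_insert_iff, Set.mem_singleton_iff]; constructor <;> rintro (rfl|rfl|rfl|rfl|rfl|rfl) <;> simp)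
        (cycle6_remove_first a45 a56 a61 a12 n34 n35 n36 n13.symm n23.symm)
    · exact hperm v x5 x6 x1 x2 x3 (by ext z; simp only [Set.mem_insert_iff, Set.mem_singleton_iff]; constructor <;> rintro (rfl|rfl|rfl|rfl|rfl|rfl) <;> simp)
        (cycle6_remove_first a56 a61 a12 a23 n45 n46 n14.symm n24.symm n34.symm)
    · exact hperm v x6 x1 x2 x3 x4 (by ext z; simp only [Set.mem_insert_iff, Set.mem_singleton_iff]; constructor <;> rintro (rfl|rfl|rfl|rfl|rfl|rfl) <;> simp)
        (cycle6_remove_first a61 a12 a23 a34 n56 n15.symm n25.symm n35.symm n45.symm)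
    · exact hperm v x1 x2 x3 x4 x5 (by ext z; simp only [Set.mem_insert_iff, Set.mem_singleton_iff]; constructor <;> rintro (rfl|rfl|rfl|rfl|rfl|rfl) <;> simp)
        (cycle6_remove_first a12 a23 a34 a45 n16.symm n26.symm n36.symm n46.symm n56.symm)

/-- two distinct cut-neighbours of `d` cannot both have outside neighbours inside the
closed neighborhood of the same other member `e` of a packing. -/
lemma cell_injective [Fintype V] (hbg : IsBlockGraph G) {D : Set V}
    (hp : IsPacking G D) {d : V} (hdD : d ∈ D)
    {u1 u2 w1 w2 e : V} (hu1 : G.Adj d u1) (hu2 : G.Adj d u2) (hne : u1 ≠ u2)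
    (hw1 : G.Adj u1 w1) (hw2 : G.Adj u2 w2) (hw1n : w1 ∉ cnbr G d) (hw2n : w2 ∉ cnbr G d)
    (heD : e ∈ D) (hed : e ≠ d) (h1 : w1 ∈ cnbr G e) (h2 : w2 ∈ cnbr G e) : False := by
  classical
  have hu1ne : u1 ∉ cnbr G e := fun h => hed (hp.eq_of_mem_cnbr heD hdD h (adj_mem_cnbr hu1))
  have hu2ne : u2 ∉ cnbr G e := fun h => hed (hp.eq_of_mem_cnbr heD hdD h (adj_mem_cnbr hu2))
  have hw1e : G.Adj e w1 := (mem_cnbr.mp h1).resolve_left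
    (fun h => hu1ne (h ▸ adj_mem_cnbr hw1.symm))
  have hw2e : G.Adj e w2 := (mem_cnbr.mp h2).resolve_left
    (fun h => hu2ne (h ▸ adj_mem_cnbr hw2.symm))
  have hw1u2 : w1 ≠ u2 := fun h => hu2ne (h ▸ h1)
  have hw2u1 : w2 ≠ u1 := fun h => hu1ne (h ▸ h2)
  have hw1d : w1 ≠ d := fun h => hw1n (h ▸ self_mem_cnbr w1)
  have hw2d : w2 ≠ d := fun h => hw2n (h ▸ self_mem_cnbr w2)
  have heu1 : e ≠ u1 := fun h => hu1ne (h ▸ self_mem_cnbr e)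
  have heu2 : e ≠ u2 := fun h => hu2ne (h ▸ self_mem_cnbr e)
  rcases eq_or_ne w1 w2 with rfl | hww
  · -- 4-cycle d-u1-w1-u2-d forces the chord `d w1`
    have hprop := cycle4_propSet hu1 hw1 hw2.symm hu2.symm hw1d.symm hne
    obtain ⟨B, hB, hsub⟩ := exists_block_superset hprop
    have : G.Adj d w1 := hbg B hB d (hsub (by simp)) w1 (hsub (by simp)) hw1d.symm
    exact hw1n (adj_mem_cnbr this)
  · -- 6-cycle d-u1-w1-e-w2-u2-d forces the chord `d e`
    have hprop := cycle6_propSet hu1 hw1 hw1e.symm hw2e hw2.symm hu2.symm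
      hw1d.symm hed.symm hw2d.symm heu1.symm hw2u1.symm hne hww hw1u2 heu2
    obtain ⟨B, hB, hsub⟩ := exists_block_superset hprop
    have : G.Adj d e := hbg B hB d (hsub (by simp)) e (hsub (by simp)) hed.symm
    exact (hp.not_adj hdD heD hed.symm) this

/-- if `γₜ = 2γ` then every member of a minimum dominating set lies in `D₁ ∪ D₂` -/
lemma gamma_subset_D1D2 [Fintype V] (hconn : G.Connected) (hbg : IsBlockGraph G)
    (h2b : ∃ B₁ B₂ : Set V, IsBlock G B₁ ∧ IsBlock G B₂ ∧ B₁ ≠ B₂)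
    (hγ2 : totalDomNum G = 2 * domNum G) {D : Set V} (hD : IsDomSet G D)
    (hcard : D.ncard = domNum G) {d : V} (hdD : d ∈ D) : d ∈ D1set G ∪ D2set G := by
  classical
  have hni := nonisolated hconn (two_vertices h2b)
  have hp := gamma_set_packing hni hγ2 hD hcard
  have hcutd := gamma_mem_cut hconn hbg h2b hγ2 hD hcard hdD
  by_contra hnot
  rw [Set.mem_union] at hnot
  push_neg at hnot
  obtain ⟨hnD1, hnD2⟩ := hnot
  have hnD1' : ∀ B : Set V, IsBlock G B → d ∈ B → ∃ u ∈ B, IsCutVertex G u ∧ u ≠ d := by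
    intro B hB hdB
    by_contra hcon
    push_neg at hcon
    exact hnD1 ⟨hcutd, B, hB, hdB, hcon⟩
  have hnD2' : ∀ x y : V, G.Adj d x → G.Adj d y → ¬IsCutVertex G x → ¬IsCutVertex G y →
      cnbr G x = cnbr G y := by
    intro x y hdx hdy hxnc hync
    by_contra hneq
    rcases eq_or_ne x y with rfl | hxy
    · exact hneq rfl
    exact hnD2 ⟨hcutd, x, y, hxy, hdx, hdy, hxnc, hync, cnbr G x, cnbr G y,
      cnbr_isBlock hconn hbg hxnc, cnbr_isBlock hconn hbg hync,
      self_mem_cnbr x, self_mem_cnbr y, hneq⟩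
  have hod : ∀ u : V, ∃ w, (G.Adj d u ∧ IsCutVertex G u) → G.Adj u w ∧ w ∉ cnbr G d := by
    intro u
    by_cases h : G.Adj d u ∧ IsCutVertex G u
    · obtain ⟨w, hw⟩ := cut_has_outside_nbr hconn h.1 h.2
      exact ⟨w, fun _ => hw⟩
    · exact ⟨d, fun h' => absurd h' h⟩
  choose wf hwf using hod
  have hdome : ∀ z : V, ∃ e, z ∉ D → e ∈ D ∧ G.Adj e z := by
    intro z
    by_cases h : z ∈ D
    · exact ⟨d, fun h' => absurd h h'⟩
    · obtain ⟨e, he, hez⟩ := hD z h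
      exact ⟨e, fun _ => ⟨he, hez⟩⟩
  choose ef hef using hdome
  set R : V → Prop := fun u => G.Adj d u ∧ IsCutVertex G u with hRdef
  have hwfadj : ∀ u, R u → G.Adj u (wf u) := fun u hu => (hwf u hu).1
  have hwfout : ∀ u, R u → wf u ∉ cnbr G d := fun u hu => (hwf u hu).2
  have hwfnD : ∀ u, R u → wf u ∉ D := by
    intro u hu hwD
    have hne : wf u ≠ d := fun h => hwfout u hu (by rw [h]; exact self_mem_cnbr d)
    exact hne (hp.eq_of_mem_cnbr hwD hdD (adj_mem_cnbr (hwfadj u hu).symm)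
      (adj_mem_cnbr hu.1))
  have hefD : ∀ u, R u → ef (wf u) ∈ D ∧ G.Adj (ef (wf u)) (wf u) :=
    fun u hu => hef _ (hwfnD u hu)
  have hefnd : ∀ u, R u → ef (wf u) ≠ d := by
    intro u hu h
    exact hwfout u hu (adj_mem_cnbr (h ▸ (hefD u hu).2))
  have hinj : ∀ u1 u2, R u1 → R u2 → ef (wf u1) = ef (wf u2) → u1 = u2 := by
    intro u1 u2 h1 h2 heq
    by_contra hne
    exact cell_injective hbg hp hdD h1.1 h2.1 hne (hwfadj u1 h1) (hwfadj u2 h2)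
      (hwfout u1 h1) (hwfout u2 h2) (hefD u1 h1).1 (hefnd u1 h1)
      (adj_mem_cnbr (hefD u1 h1).2) (heq ▸ adj_mem_cnbr (hefD u2 h2).2)
  have hcex : ∃ c, G.Adj d c ∧ IsCutVertex G c ∧
      ∀ y, G.Adj d y → ¬ IsCutVertex G y → G.Adj c y := by
    by_cases hex : ∃ x, G.Adj d x ∧ ¬ IsCutVertex G x
    · obtain ⟨x, hdx, hxnc⟩ := hex
      have hBx := cnbr_isBlock hconn hbg hxnc
      have hdcx : d ∈ cnbr G x := adj_mem_cnbr hdx.symm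
      obtain ⟨c, hcB, hccut, hcd⟩ := hnD1' (cnbr G x) hBx hdcx
      have hdc : G.Adj d c := hbg (cnbr G x) hBx d hdcx c hcB (Ne.symm hcd)
      refine ⟨c, hdc, hccut, ?_⟩
      intro y hdy hync
      have heq : cnbr G y = cnbr G x := hnD2' y x hdy hdx hync hxnc
      have hyc : c ∈ cnbr G y := by rw [heq]; exact hcB
      exact ((mem_cnbr.mp hyc).resolve_left (fun h => hync (h ▸ hccut))).symm
    · push_neg at hex
      obtain ⟨c, hdc⟩ := hni d
      exact ⟨c, hdc, hex c hdc, fun y hdy hync => absurd (hex y hdy) hync⟩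
  obtain ⟨c, hdc, hccut, hcnc⟩ := hcex
  set g : V → V := fun e' => if h : ∃ u, R u ∧ ef (wf u) = e' then wf h.choose
    else (hni e').choose with hgdef
  have hg1 : ∀ u, R u → g (ef (wf u)) = wf u := by
    intro u hu
    have hex : ∃ u', R u' ∧ ef (wf u') = ef (wf u) := ⟨u, hu, rfl⟩
    rw [hgdef]
    simp only
    rw [dif_pos hex]
    have hspec := hex.choose_spec
    rw [hinj _ _ hspec.1 hu hspec.2]
  have hgadj : ∀ e', G.Adj (g e') e' := by
    intro e'
    rw [hgdef]
    simp only
    by_cases hex : ∃ u, R u ∧ ef (wf u) = e'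
    · rw [dif_pos hex]
      have hspec := hex.choose_spec
      have h2 := ((hefD _ hspec.1).2).symm
      rw [hspec.2] at h2
      exact h2
    · rw [dif_neg hex]
      exact ((hni e').choose_spec).symm
  set T : Set V := ((D \ {d}) ∪ {c}) ∪ g '' (D \ {d}) with hTdef
  have hTtotal : IsTotalDomSet G T := by
    intro v
    by_cases hvD : v ∈ D
    · rcases eq_or_ne v d with rfl | hvd
      · exact ⟨c, Or.inl (Or.inr rfl), hdc.symm⟩
      · exact ⟨g v, Or.inr ⟨v, ⟨hvD, hvd⟩, rfl⟩, hgadj v⟩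
    · by_cases hvc : v ∈ cnbr G d
      · have hdv : G.Adj d v := (mem_cnbr.mp hvc).resolve_left (fun h => hvD (h ▸ hdD))
        by_cases hvcut : IsCutVertex G v
        · have hvR : R v := ⟨hdv, hvcut⟩
          have hefd : ef (wf v) ∈ D \ {d} := ⟨(hefD v hvR).1, hefnd v hvR⟩
          refine ⟨g (ef (wf v)), Or.inr ⟨_, hefd, rfl⟩, ?_⟩
          rw [hg1 v hvR]
          exact (hwfadj v hvR).symm
        · exact ⟨c, Or.inl (Or.inr rfl), hcnc v hdv hvcut⟩
      · have he' := hef v hvD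
        have hend : ef v ≠ d := fun h => hvc (adj_mem_cnbr (h ▸ he'.2))
        exact ⟨ef v, Or.inl (Or.inl ⟨he'.1, hend⟩), he'.2⟩
  have h1 : (D \ {d}).ncard = D.ncard - 1 :=
    Set.ncard_diff_singleton_of_mem hdD
  have h0 : 0 < D.ncard := (Set.ncard_pos (Set.toFinite D)).mpr ⟨d, hdD⟩
  have hTcard : T.ncard ≤ 2 * D.ncard - 1 := by
    calc T.ncard ≤ ((D \ {d}) ∪ {c}).ncard + (g '' (D \ {d})).ncard :=
          Set.ncard_union_le _ _
      _ ≤ ((D \ {d}).ncard + 1) + (D \ {d}).ncard := by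
          have hu := Set.ncard_union_le (D \ {d}) ({c} : Set V)
          have hi := Set.ncard_image_le (f := g) (s := D \ {d}) (Set.toFinite _)
          simp only [Set.ncard_singleton] at hu
          omega
      _ ≤ 2 * D.ncard - 1 := by omega
  have hle := totalDomNum_le hTtotal
  rw [hγ2, ← hcard] at hle
  omega

end Lemmas

/-- For a connected block graph `G` with at least two blocks: `γₜ(G) = 2γ(G)` iff `G` has a
unique minimum dominating set `D`, `D = D₁ ∪ D₂`, and `D` is a packing in `G`. -/
theorem stmt12 {V : Type*} [Fintype V] (G : SimpleGraph V) (hconn : G.Connected)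
    (hbg : IsBlockGraph G)
    (h2b : ∃ B₁ B₂ : Set V, IsBlock G B₁ ∧ IsBlock G B₂ ∧ B₁ ≠ B₂) :
    totalDomNum G = 2 * domNum G ↔
      ∃ D : Set V, IsMinDomSet G D ∧ (∀ D' : Set V, IsMinDomSet G D' → D' = D) ∧
        D = D1set G ∪ D2set G ∧ IsPacking G D := by
  constructor
  · intro hγ2
    have hni := nonisolated hconn (two_vertices h2b)
    obtain ⟨D, hD, hcard⟩ := exists_gamma_set G
    have hDeq : D = D1set G ∪ D2set G :=
      Set.Subset.antisymm (fun d hd => gamma_subset_D1D2 hconn hbg h2b hγ2 hD hcard hd)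
        (D1D2_subset_gamma hconn hbg h2b hγ2 hD hcard)
    refine ⟨D, ⟨hD, hcard⟩, ?_, hDeq, gamma_set_packing hni hγ2 hD hcard⟩
    intro D' hD'
    calc D' = D1set G ∪ D2set G :=
          Set.Subset.antisymm
            (fun d hd => gamma_subset_D1D2 hconn hbg h2b hγ2 hD'.1 hD'.2 hd)
            (D1D2_subset_gamma hconn hbg h2b hγ2 hD'.1 hD'.2)
      _ = D := hDeq.symm
  · rintro ⟨D, hmin, _, heq, hpack⟩
    exact backward_dir hconn hbg h2b hmin heq hpack

end TotalDom
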